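/- Let I be an ideal of ℝ[x], let Q be an indexed set of polynomials, let c be a cut-off function for Q, and let w be a positive integer. If there is R ∈ ℝ, R ≥ 0, such that Q ⊢^{c,I}_{w,2} R − x² ≥ 0 for every variable x, then for every polynomial p of degree at most 2d there exists r ∈ ℝ, r ≥ 0, such that Q ⊢^{c,I}_{w,2d} r ≥ p (i.e., the constant polynomial 1 is an order unit for the pre-order induced by the cone PS^{c,I}_{w,2d}(Q) on polynomials of degree at most 2d). -/

import Mathlib

open MvPolynomial

noncomputable section

/-- The sum of squares of a list of polynomials. -/
def sosOfI {σ : Type} (l : List (MvPolynomial σ ℝ)) : MvPolynomial σ ℝ :=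
  (l.map (· ^ 2)).sum

/-- A Positivstellensatz proof mod the ideal `I` of `goal ≥ 0` from the inequality
constraints `q j ≥ 0` (`j : Fin ℓ`) and the equality constraints `p j = 0`
(`j : Fin m`). -/
structure PSProofMod (σ : Type) (ℓ m : ℕ) (q : Fin ℓ → MvPolynomial σ ℝ)
    (p : Fin m → MvPolynomial σ ℝ) (I : Ideal (MvPolynomial σ ℝ))
    (goal : MvPolynomial σ ℝ) : Type where
  Js : Finset (Finset (Fin ℓ))
  empty_not_mem : ∅ ∉ Js
  r0 : List (MvPolynomial σ ℝ)
  r : Finset (Fin ℓ) → List (MvPolynomial σ ℝ)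
  t : Fin m → MvPolynomial σ ℝ
  identity : goal - (sosOfI r0 + ∑ J ∈ Js, sosOfI (r J) * ∏ j ∈ J, q j
      + ∑ j, t j * p j) ∈ I

/-- A cut-off function for the system `q, p`. -/
def IsCutoffI {σ : Type} {ℓ m : ℕ} (q : Fin ℓ → MvPolynomial σ ℝ)
    (p : Fin m → MvPolynomial σ ℝ) (c : Finset (Fin ℓ) ⊕ Fin m → ℕ) : Prop :=
  (∀ J : Finset (Fin ℓ), ∑ j ∈ J, (q j).totalDegree ≤ c (Sum.inl J)) ∧
  (∀ j : Fin m, (p j).totalDegree ≤ c (Sum.inr j))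

/-- The proof has degree mod `c` at most `d` (the zero polynomial having
degree `−∞`). -/
def PSProofMod.degreeModLE {σ : Type} {ℓ m : ℕ} {q : Fin ℓ → MvPolynomial σ ℝ}
    {p : Fin m → MvPolynomial σ ℝ} {I : Ideal (MvPolynomial σ ℝ)}
    {goal : MvPolynomial σ ℝ} (π : PSProofMod σ ℓ m q p I goal)
    (c : Finset (Fin ℓ) ⊕ Fin m → ℕ) (d : ℕ) : Prop :=
  goal.totalDegree ≤ d ∧ (sosOfI π.r0).totalDegree ≤ d ∧
  (∀ J ∈ π.Js, sosOfI (π.r J) ≠ 0 → (sosOfI (π.r J)).totalDegree + c (Sum.inl J) ≤ d) ∧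
  (∀ j, π.t j ≠ 0 → (π.t j).totalDegree + c (Sum.inr j) ≤ d)

/-- The proof has product-width at most `w`. -/
def PSProofMod.widthLE {σ : Type} {ℓ m : ℕ} {q : Fin ℓ → MvPolynomial σ ℝ}
    {p : Fin m → MvPolynomial σ ℝ} {I : Ideal (MvPolynomial σ ℝ)}
    {goal : MvPolynomial σ ℝ} (π : PSProofMod σ ℓ m q p I goal) (w : ℕ) : Prop :=
  ∀ J ∈ π.Js, J.card ≤ w

/-- `PS^{c,I}_{w,d}(Q)`: the cone of polynomials of degree at most `d` with a PS
proof mod `I` of degree mod `c` at most `d` and product-width at most `w`.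
`Q ⊢^{c,I}_{w,d} a ≥ b` is expressed as `a - b ∈ PSconeI …`. -/
def PSconeI (σ : Type) (ℓ m : ℕ) (q : Fin ℓ → MvPolynomial σ ℝ)
    (p : Fin m → MvPolynomial σ ℝ) (I : Ideal (MvPolynomial σ ℝ))
    (c : Finset (Fin ℓ) ⊕ Fin m → ℕ) (w d : ℕ) : Set (MvPolynomial σ ℝ) :=
  {g | g.totalDegree ≤ d ∧
    ∃ π : PSProofMod σ ℓ m q p I g, π.degreeModLE c d ∧ π.widthLE w}

namespace PSAux

variable {σ : Type} {ℓ m : ℕ} {q : Fin ℓ → MvPolynomial σ ℝ}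
  {p : Fin m → MvPolynomial σ ℝ} {I : Ideal (MvPolynomial σ ℝ)}
  {c : Finset (Fin ℓ) ⊕ Fin m → ℕ} {w : ℕ}

lemma sosOfI_nil : sosOfI ([] : List (MvPolynomial σ ℝ)) = 0 := rfl

lemma sosOfI_cons (a : MvPolynomial σ ℝ) (l : List (MvPolynomial σ ℝ)) :
    sosOfI (a :: l) = a ^ 2 + sosOfI l := by simp [sosOfI]

lemma sosOfI_append (l₁ l₂ : List (MvPolynomial σ ℝ)) :
    sosOfI (l₁ ++ l₂) = sosOfI l₁ + sosOfI l₂ := by simp [sosOfI]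

lemma sosOfI_map_mul (f : MvPolynomial σ ℝ) (l : List (MvPolynomial σ ℝ)) :
    sosOfI (l.map (f * ·)) = f ^ 2 * sosOfI l := by
  induction l with
  | nil => simp [sosOfI]
  | cons a l ih => rw [List.map_cons, sosOfI_cons, sosOfI_cons, ih, mul_pow]; ring

lemma cone_mono {d d' : ℕ} (h : d ≤ d') :
    PSconeI σ ℓ m q p I c w d ⊆ PSconeI σ ℓ m q p I c w d' := by
  rintro g ⟨hg, π, ⟨h1, h2, h3, h4⟩, hwid⟩
  exact ⟨hg.trans h, π, ⟨h1.trans h, h2.trans h,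
    fun J hJ hn => (h3 J hJ hn).trans h, fun j hn => (h4 j hn).trans h⟩, hwid⟩

lemma zero_mem (d : ℕ) : (0 : MvPolynomial σ ℝ) ∈ PSconeI σ ℓ m q p I c w d := by
  refine ⟨by simp, ⟨∅, by simp, [], fun _ => [], 0, ?_⟩, ⟨by simp, ?_, ?_, ?_⟩, ?_⟩
  · simp [sosOfI_nil]
  · simp [sosOfI_nil]
  · intro J hJ; simp at hJ
  · simp
  · intro J hJ; simp at hJ

lemma sq_mem {d : ℕ} (f : MvPolynomial σ ℝ) (hf : (f ^ 2).totalDegree ≤ d) :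
    f ^ 2 ∈ PSconeI σ ℓ m q p I c w d := by
  refine ⟨hf, ⟨∅, by simp, [f], fun _ => [], 0, ?_⟩, ⟨hf, ?_, ?_, ?_⟩, ?_⟩
  · simp [sosOfI_cons, sosOfI_nil]
  · simpa [sosOfI_cons, sosOfI_nil] using hf
  · intro J hJ; simp at hJ
  · simp
  · intro J hJ; simp at hJ


lemma degree_add_aux {a b : MvPolynomial σ ℝ} {e k : ℕ}
    (ha : a ≠ 0 → a.totalDegree + k ≤ e) (hb : b ≠ 0 → b.totalDegree + k ≤ e)
    (hab : a + b ≠ 0) : (a + b).totalDegree + k ≤ e := by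
  rcases eq_or_ne a 0 with rfl | ha0
  · simpa using hb (by simpa using hab)
  rcases eq_or_ne b 0 with rfl | hb0
  · simpa using ha (by simpa using hab)
  have h1 := ha ha0
  have h2 := hb hb0
  have h3 := totalDegree_add a b
  omega

lemma add_mem {d : ℕ} {g₁ g₂ : MvPolynomial σ ℝ}
    (h₁ : g₁ ∈ PSconeI σ ℓ m q p I c w d) (h₂ : g₂ ∈ PSconeI σ ℓ m q p I c w d) :
    g₁ + g₂ ∈ PSconeI σ ℓ m q p I c w d := by
  obtain ⟨hg₁, π₁, ⟨hd1, hd2, hd3, hd4⟩, hw₁⟩ := h₁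
  obtain ⟨hg₂, π₂, ⟨he1, he2, he3, he4⟩, hw₂⟩ := h₂
  have hdeg : (g₁ + g₂).totalDegree ≤ d := by
    have := totalDegree_add g₁ g₂; omega
  have key : ∀ (A B : Finset (Finset (Fin ℓ))) (f : Finset (Fin ℓ) → MvPolynomial σ ℝ),
      ∑ J ∈ A ∪ B, (if J ∈ A then f J else 0) * ∏ j ∈ J, q j
        = ∑ J ∈ A, f J * ∏ j ∈ J, q j := by
    intro A B f
    rw [← Finset.sum_subset Finset.subset_union_left
      (fun J _ hJ => by rw [if_neg hJ, zero_mul])]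
    exact Finset.sum_congr rfl fun J hJ => by rw [if_pos hJ]
  have hite : ∀ (A : Finset (Finset (Fin ℓ))) (f : Finset (Fin ℓ) → List (MvPolynomial σ ℝ))
      (J : Finset (Fin ℓ)), sosOfI (if J ∈ A then f J else [])
        = if J ∈ A then sosOfI (f J) else 0 := by
    intro A f J; split <;> simp [sosOfI_nil]
  refine ⟨hdeg, ⟨π₁.Js ∪ π₂.Js, by simp [π₁.empty_not_mem, π₂.empty_not_mem],
    π₁.r0 ++ π₂.r0,
    fun J => (if J ∈ π₁.Js then π₁.r J else []) ++ (if J ∈ π₂.Js then π₂.r J else []),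
    fun j => π₁.t j + π₂.t j, ?_⟩, ⟨hdeg, ?_, ?_, ?_⟩, ?_⟩
  · -- identity
    have e1 : ∑ J ∈ π₁.Js ∪ π₂.Js,
        sosOfI ((if J ∈ π₁.Js then π₁.r J else []) ++ (if J ∈ π₂.Js then π₂.r J else []))
          * ∏ j ∈ J, q j
        = ∑ J ∈ π₁.Js, sosOfI (π₁.r J) * ∏ j ∈ J, q j
          + ∑ J ∈ π₂.Js, sosOfI (π₂.r J) * ∏ j ∈ J, q j := by
      have : ∀ J ∈ π₁.Js ∪ π₂.Js,
          sosOfI ((if J ∈ π₁.Js then π₁.r J else []) ++ (if J ∈ π₂.Js then π₂.r J else []))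
            * ∏ j ∈ J, q j
          = (if J ∈ π₁.Js then sosOfI (π₁.r J) else 0) * ∏ j ∈ J, q j
            + (if J ∈ π₂.Js then sosOfI (π₂.r J) else 0) * ∏ j ∈ J, q j := by
        intro J _
        rw [sosOfI_append, hite, hite, add_mul]
      rw [Finset.sum_congr rfl this, Finset.sum_add_distrib, key,
        Finset.union_comm π₁.Js π₂.Js]
      rw [key]
    have e2 : ∑ j, (π₁.t j + π₂.t j) * p j
        = ∑ j, π₁.t j * p j + ∑ j, π₂.t j * p j := by
      rw [← Finset.sum_add_distrib]
      exact Finset.sum_congr rfl fun j _ => add_mul _ _ _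
    rw [sosOfI_append, e1, e2]
    have := I.add_mem π₁.identity π₂.identity
    convert this using 1
    ring
  · -- r0 degree
    rw [sosOfI_append]
    have := totalDegree_add (sosOfI π₁.r0) (sosOfI π₂.r0); omega
  · -- r J degree
    intro J hJ hn
    rw [sosOfI_append] at hn ⊢
    refine degree_add_aux ?_ ?_ hn
    · rw [hite]; split
      · exact fun h => hd3 J ‹_› h
      · simp
    · rw [hite]; split
      · exact fun h => he3 J ‹_› h
      · simp
  · -- t degree
    intro j hn
    exact degree_add_aux (hd4 j) (he4 j) hn
  · -- width
    intro J hJ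
    rcases Finset.mem_union.mp hJ with h | h
    · exact hw₁ J h
    · exact hw₂ J h

lemma mul_sq_mem {d k : ℕ} {g : MvPolynomial σ ℝ} (f : MvPolynomial σ ℝ)
    (hf : f.totalDegree ≤ k) (hg : g ∈ PSconeI σ ℓ m q p I c w d) :
    f ^ 2 * g ∈ PSconeI σ ℓ m q p I c w (d + 2 * k) := by
  obtain ⟨hgd, π, ⟨hd1, hd2, hd3, hd4⟩, hwid⟩ := hg
  have hfk : (f ^ 2).totalDegree ≤ 2 * k := by
    have := totalDegree_pow f 2
    nlinarith [hf]
  have hmul : ∀ (a : MvPolynomial σ ℝ), (f ^ 2 * a).totalDegree ≤ 2 * k + a.totalDegree := by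
    intro a
    have := totalDegree_mul (f ^ 2) a; omega
  refine ⟨by have := hmul g; omega, ⟨π.Js, π.empty_not_mem, π.r0.map (f * ·),
    fun J => (π.r J).map (f * ·), fun j => f ^ 2 * π.t j, ?_⟩, ⟨by have := hmul g; omega, ?_, ?_, ?_⟩, hwid⟩
  · -- identity
    simp only [sosOfI_map_mul]
    have heq : f ^ 2 * g - (f ^ 2 * sosOfI π.r0
        + ∑ J ∈ π.Js, f ^ 2 * sosOfI (π.r J) * ∏ j ∈ J, q j
        + ∑ j, f ^ 2 * π.t j * p j)
        = f ^ 2 * (g - (sosOfI π.r0 + ∑ J ∈ π.Js, sosOfI (π.r J) * ∏ j ∈ J, q j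
          + ∑ j, π.t j * p j)) := by
      simp only [mul_sub, mul_add, Finset.mul_sum, mul_assoc]
    rw [heq]
    exact Ideal.mul_mem_left _ _ π.identity
  · rw [sosOfI_map_mul]
    have := hmul (sosOfI π.r0); omega
  · intro J hJ hn
    rw [sosOfI_map_mul] at hn ⊢
    have hn' : sosOfI (π.r J) ≠ 0 := fun h => hn (by rw [h, mul_zero])
    have := hd3 J hJ hn'
    have := hmul (sosOfI (π.r J))
    omega
  · intro j hn
    have hn2 : f ^ 2 * π.t j ≠ 0 := hn
    have hn' : π.t j ≠ 0 := fun h => hn2 (by rw [h, mul_zero])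
    have h4 := hd4 j hn'
    have h5 := hmul (π.t j)
    show (f ^ 2 * π.t j).totalDegree + c (Sum.inr j) ≤ d + 2 * k
    omega

lemma smul_mem {d : ℕ} {g : MvPolynomial σ ℝ} {a : ℝ} (ha : 0 ≤ a)
    (hg : g ∈ PSconeI σ ℓ m q p I c w d) :
    C a * g ∈ PSconeI σ ℓ m q p I c w d := by
  have := mul_sq_mem (σ := σ) (k := 0) (C (Real.sqrt a))
    (by simp [totalDegree_C]) hg
  have hC : (C (Real.sqrt a) : MvPolynomial σ ℝ) ^ 2 = C a := by
    rw [← map_pow, Real.sq_sqrt ha]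
  rw [hC] at this
  simpa using this


def S (β : σ →₀ ℕ) : ℕ := β.sum fun _ n => n

lemma S_add (a b : σ →₀ ℕ) : S (a + b) = S a + S b :=
  Finsupp.sum_add_index' (fun _ => rfl) (fun _ _ _ => rfl)

lemma S_single (v : σ) (n : ℕ) : S (Finsupp.single v n) = n :=
  Finsupp.sum_single_index rfl

lemma S_zero : S (0 : σ →₀ ℕ) = 0 := rfl

lemma S_eq_zero {β : σ →₀ ℕ} (h : S β = 0) : β = 0 := by
  ext v
  simp only [Finsupp.coe_zero, Pi.zero_apply]
  by_contra hv
  have hvs : v ∈ β.support := Finsupp.mem_support_iff.mpr hv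
  have hle : β v ≤ ∑ u ∈ β.support, β u :=
    Finset.single_le_sum (fun _ _ => Nat.zero_le _) hvs
  have : S β = ∑ u ∈ β.support, β u := rfl
  omega

lemma exists_mem_support {β : σ →₀ ℕ} (h : S β ≠ 0) : ∃ v, β v ≠ 0 := by
  by_contra hc
  push_neg at hc
  exact h (by rw [show β = 0 from Finsupp.ext fun v => hc v, S_zero])

lemma decompose {β : σ →₀ ℕ} {v : σ} (hv : β v ≠ 0) :
    (β - Finsupp.single v 1) + Finsupp.single v 1 = β := by
  ext u
  rcases eq_or_ne u v with rfl | hu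
  · simp [Finsupp.single_apply]
    omega
  · have h1 : (Finsupp.single v 1) u = 0 := Finsupp.single_eq_of_ne' (fun h => hu h.symm)
    rw [Finsupp.add_apply, Finsupp.tsub_apply, h1]
    omega

lemma exists_sum_eq : ∀ (k : ℕ) (α : σ →₀ ℕ), k ≤ S α →
    ∃ β γ : σ →₀ ℕ, β + γ = α ∧ S β = k := by
  intro k
  induction k with
  | zero => exact fun α _ => ⟨0, α, zero_add α, S_zero⟩
  | succ k ih =>
    intro α hk
    obtain ⟨β, γ, hbg, hb⟩ := ih α (by omega)
    have hSg : S γ ≠ 0 := by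
      have := S_add β γ
      rw [hbg] at this
      omega
    obtain ⟨v, hv⟩ := exists_mem_support hSg
    refine ⟨β + Finsupp.single v 1, γ - Finsupp.single v 1, ?_, ?_⟩
    · rw [add_assoc, add_comm (Finsupp.single v 1), decompose hv, hbg]
    · rw [S_add, S_single, hb]

lemma exists_split (α : σ →₀ ℕ) (d : ℕ) (h : S α ≤ 2 * d) :
    ∃ β γ : σ →₀ ℕ, β + γ = α ∧ S β ≤ d ∧ S γ ≤ d := by
  obtain ⟨β, γ, hbg, hb⟩ := exists_sum_eq (min (S α) d) α (min_le_left _ _)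
  have := S_add β γ
  rw [hbg] at this
  exact ⟨β, γ, hbg, by omega, by omega⟩

lemma pow_sub_sq_mem {R : ℝ} (hR : 0 ≤ R)
    (hball : ∀ v : σ, (C R - X v ^ 2 : MvPolynomial σ ℝ) ∈ PSconeI σ ℓ m q p I c w 2) :
    ∀ (k : ℕ) (β : σ →₀ ℕ), S β = k →
      (C (R ^ k) - (monomial β 1) ^ 2 : MvPolynomial σ ℝ) ∈ PSconeI σ ℓ m q p I c w (2 * k) := by
  intro k
  induction k with
  | zero =>
    intro β hβ
    rw [S_eq_zero hβ]
    have : (C (R ^ 0) - (monomial (0 : σ →₀ ℕ) 1) ^ 2 : MvPolynomial σ ℝ) = 0 := by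
      simp [monomial_zero']
    rw [this]
    exact zero_mem _
  | succ k ih =>
    intro β hβ
    obtain ⟨v, hv⟩ := exists_mem_support (by omega : S β ≠ 0)
    set β' := β - Finsupp.single v 1 with hβ'def
    have hdec : β' + Finsupp.single v 1 = β := decompose hv
    have hS' : S β' = k := by
      have := S_add β' (Finsupp.single v 1)
      rw [hdec, S_single] at this
      omega
    have hmono : (monomial β 1 : MvPolynomial σ ℝ) = monomial β' 1 * X v := by
      rw [show (X v : MvPolynomial σ ℝ) = monomial (Finsupp.single v 1) 1 from rfl,
        monomial_mul, hdec, one_mul]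
    have h1 : C (R ^ k) * (C R - X v ^ 2) ∈ PSconeI σ ℓ m q p I c w (2 * (k + 1)) :=
      cone_mono (by omega) (smul_mem (pow_nonneg hR k) (hball v))
    have h2 : (X v) ^ 2 * (C (R ^ k) - (monomial β' 1) ^ 2)
        ∈ PSconeI σ ℓ m q p I c w (2 * (k + 1)) := by
      have := mul_sq_mem (k := 1) (X v) (le_of_eq (totalDegree_X v)) (ih β' hS')
      have he : 2 * k + 2 * 1 = 2 * (k + 1) := by ring
      rwa [he] at this
    have := add_mem h1 h2
    have e : (C (R ^ (k + 1)) - (monomial β 1) ^ 2 : MvPolynomial σ ℝ)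
        = C (R ^ k) * (C R - X v ^ 2) + (X v) ^ 2 * (C (R ^ k) - (monomial β' 1) ^ 2) := by
      rw [hmono, pow_succ, map_mul]
      ring
    rwa [e]


lemma sum_mem {d : ℕ} {ι : Type*} (s : Finset ι) (f : ι → MvPolynomial σ ℝ)
    (h : ∀ i ∈ s, f i ∈ PSconeI σ ℓ m q p I c w d) :
    ∑ i ∈ s, f i ∈ PSconeI σ ℓ m q p I c w d :=
  Finset.sum_induction f (· ∈ PSconeI σ ℓ m q p I c w d)
    (fun _ _ ha hb => add_mem ha hb) (zero_mem d) h

lemma mono_bound {R : ℝ} (hR : 0 ≤ R)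
    (hball : ∀ v : σ, (C R - X v ^ 2 : MvPolynomial σ ℝ) ∈ PSconeI σ ℓ m q p I c w 2)
    (d : ℕ) (α : σ →₀ ℕ) (hα : S α ≤ 2 * d) :
    ∃ r : ℝ, 0 ≤ r ∧ (C r - monomial α 1 : MvPolynomial σ ℝ) ∈ PSconeI σ ℓ m q p I c w (2 * d)
      ∧ (C r + monomial α 1 : MvPolynomial σ ℝ) ∈ PSconeI σ ℓ m q p I c w (2 * d) := by
  obtain ⟨β, γ, hadd, hSβ, hSγ⟩ := exists_split α d hα
  set b : MvPolynomial σ ℝ := monomial β 1 with hb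
  set g : MvPolynomial σ ℝ := monomial γ 1 with hg
  have hbg : b * g = monomial α 1 := by
    rw [hb, hg, monomial_mul, hadd, one_mul]
  have h1 : (C (R ^ S β) - b ^ 2 : MvPolynomial σ ℝ) ∈ PSconeI σ ℓ m q p I c w (2 * d) :=
    cone_mono (by omega) (pow_sub_sq_mem hR hball (S β) β rfl)
  have h2 : (C (R ^ S γ) - g ^ 2 : MvPolynomial σ ℝ) ∈ PSconeI σ ℓ m q p I c w (2 * d) :=
    cone_mono (by omega) (pow_sub_sq_mem hR hball (S γ) γ rfl)
  have hbd : b.totalDegree ≤ d := by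
    rw [hb, totalDegree_monomial β (one_ne_zero)]; exact hSβ
  have hgd : g.totalDegree ≤ d := by
    rw [hg, totalDegree_monomial γ (one_ne_zero)]; exact hSγ
  have hsubd : ((b - g) ^ 2).totalDegree ≤ 2 * d := by
    have h3 := totalDegree_pow (b - g) 2
    have h4 : (b - g).totalDegree ≤ d := by
      rw [sub_eq_add_neg]
      have := totalDegree_add b (-g)
      rw [totalDegree_neg] at this
      omega
    omega
  have haddd : ((b + g) ^ 2).totalDegree ≤ 2 * d := by
    have h3 := totalDegree_pow (b + g) 2
    have h4 := totalDegree_add b g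
    omega
  have hsq₁ : ((b - g) ^ 2 : MvPolynomial σ ℝ) ∈ PSconeI σ ℓ m q p I c w (2 * d) :=
    sq_mem _ hsubd
  have hsq₂ : ((b + g) ^ 2 : MvPolynomial σ ℝ) ∈ PSconeI σ ℓ m q p I c w (2 * d) :=
    sq_mem _ haddd
  have hhalf : (C (1/2 : ℝ) : MvPolynomial σ ℝ) * 2 = 1 := by
    rw [show (2 : MvPolynomial σ ℝ) = C 2 from (map_ofNat C 2).symm, ← map_mul]
    norm_num
  refine ⟨(R ^ S β + R ^ S γ) / 2, by positivity, ?_, ?_⟩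
  · have hsum := smul_mem (by norm_num : (0:ℝ) ≤ 1/2)
      (add_mem (add_mem h1 h2) hsq₁)
    have e : (C ((R ^ S β + R ^ S γ) / 2) - monomial α 1 : MvPolynomial σ ℝ)
        = C (1/2 : ℝ) * ((C (R ^ S β) - b ^ 2) + (C (R ^ S γ) - g ^ 2) + (b - g) ^ 2) := by
      rw [← hbg, show ((R ^ S β + R ^ S γ) / 2 : ℝ) = (1/2) * (R ^ S β + R ^ S γ) by ring,
        map_mul, map_add]
      linear_combination (b * g) * hhalf
    rwa [e]
  · have hsum := smul_mem (by norm_num : (0:ℝ) ≤ 1/2)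
      (add_mem (add_mem h1 h2) hsq₂)
    have e : (C ((R ^ S β + R ^ S γ) / 2) + monomial α 1 : MvPolynomial σ ℝ)
        = C (1/2 : ℝ) * ((C (R ^ S β) - b ^ 2) + (C (R ^ S γ) - g ^ 2) + (b + g) ^ 2) := by
      rw [← hbg, show ((R ^ S β + R ^ S γ) / 2 : ℝ) = (1/2) * (R ^ S β + R ^ S γ) by ring,
        map_mul, map_add]
      linear_combination (-(b * g)) * hhalf
    rwa [e]

end PSAux

/-- **Lemma (order unit).** If `Q ⊢^{c,I}_{w,2} R − x² ≥ 0` for every variable `x`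
and some `R ≥ 0`, then for every polynomial `p₀` of degree at most `2d` there is
`r ≥ 0` with `Q ⊢^{c,I}_{w,2d} r ≥ p₀`; i.e. the constant `1` is an order unit for
the pre-order induced by `PS^{c,I}_{w,2d}(Q)` on polynomials of degree at most `2d`. -/
theorem statement15 (σ : Type) (ℓ m : ℕ) (q : Fin ℓ → MvPolynomial σ ℝ)
    (p : Fin m → MvPolynomial σ ℝ) (I : Ideal (MvPolynomial σ ℝ))
    (c : Finset (Fin ℓ) ⊕ Fin m → ℕ) (hc : IsCutoffI q p c) (w : ℕ) (hw : 0 < w)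
    (R : ℝ) (hR : 0 ≤ R)
    (hball : ∀ v : σ, (C R - X v ^ 2 : MvPolynomial σ ℝ) ∈ PSconeI σ ℓ m q p I c w 2)
    (d : ℕ) (p₀ : MvPolynomial σ ℝ) (hp₀ : p₀.totalDegree ≤ 2 * d) :
    ∃ r : ℝ, 0 ≤ r ∧ (C r - p₀) ∈ PSconeI σ ℓ m q p I c w (2 * d) := by
  classical
  have hb : ∀ α : σ →₀ ℕ, α ∈ p₀.support →
      ∃ r : ℝ, 0 ≤ r ∧ (C r - monomial α 1 : MvPolynomial σ ℝ) ∈ PSconeI σ ℓ m q p I c w (2 * d)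
        ∧ (C r + monomial α 1 : MvPolynomial σ ℝ) ∈ PSconeI σ ℓ m q p I c w (2 * d) :=
    fun α hα => PSAux.mono_bound hR hball d α (le_trans (le_totalDegree hα) hp₀)
  choose rf hrf0 hrfm hrfp using hb
  refine ⟨∑ α ∈ p₀.support.attach, |coeff α.1 p₀| * rf α.1 α.2, ?_, ?_⟩
  · exact Finset.sum_nonneg fun α _ => mul_nonneg (abs_nonneg _) (hrf0 α.1 α.2)
  · have hp : p₀ = ∑ α ∈ p₀.support.attach, monomial α.1 (coeff α.1 p₀) := by
      have h5 := Finset.sum_attach p₀.support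
        (fun β => (monomial β (coeff β p₀) : MvPolynomial σ ℝ))
      rw [support_sum_monomial_coeff] at h5
      exact h5.symm
    have e : (C (∑ α ∈ p₀.support.attach, |coeff α.1 p₀| * rf α.1 α.2) - p₀ : MvPolynomial σ ℝ)
        = ∑ α ∈ p₀.support.attach,
            (C (|coeff α.1 p₀| * rf α.1 α.2) - monomial α.1 (coeff α.1 p₀)) := by
      rw [Finset.sum_sub_distrib, ← map_sum, ← hp]
    rw [e]
    refine PSAux.sum_mem _ _ fun α _ => ?_
    set a := coeff α.1 p₀ with hadef
    rcases le_or_gt 0 a with h | h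
    · rw [abs_of_nonneg h]
      have hm := PSAux.smul_mem h (hrfm α.1 α.2)
      have e2 : C a * (C (rf α.1 α.2) - monomial α.1 1)
          = (C (a * rf α.1 α.2) - monomial α.1 a : MvPolynomial σ ℝ) := by
        rw [mul_sub, ← map_mul, C_mul_monomial, mul_one]
      rwa [e2] at hm
    · rw [abs_of_neg h]
      have hm := PSAux.smul_mem (neg_nonneg.mpr h.le) (hrfp α.1 α.2)
      have e2 : C (-a) * (C (rf α.1 α.2) + monomial α.1 1)
          = (C (-a * rf α.1 α.2) - monomial α.1 a : MvPolynomial σ ℝ) := by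
        rw [mul_add, ← map_mul, C_mul_monomial, mul_one, map_neg, ← sub_eq_add_neg]
      rwa [e2] at hm
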